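/- Let 0<ε₁<ε₂<ε₃ and let ζ = (ζ₁,0,ζ₃) with ζ₁² = ε₃(ε₁−ε₂)/(ε₁−ε₃) and ζ₃² = ε₁(ε₃−ε₂)/(ε₃−ε₁) be a singular point of the Fresnel surface {𝒩 = 0}. Then the Hessian matrix D²𝒩(ζ) has block form diag-plus-corner structure with entries D₂₂ = 2(ε₁−ε₂)(ε₂−ε₃)/(ε₁ε₂ε₃) > 0, D₁₁ = −8(ε₂−ε₁)/(ε₂(ε₃−ε₁)) < 0, D₃₃ = −8(ε₂−ε₃)/(ε₂(ε₁−ε₃)) > 0, D₁₃ = −4(ε₁+ε₃)√((ε₂−ε₁)(ε₃−ε₂))/(ε₂√(ε₁ε₃)(ε₃−ε₁)), D₁₂ = D₂₃ = 0, and D₁₁D₃₃ − D₁₃² = −16(ε₂−ε₁)(ε₃−ε₂)/(ε₁ε₂²ε₃) < 0. Consequently D²𝒩(ζ) has two positive and one negative eigenvalue. -/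

import Mathlib

open Polynomial

/-- The defining polynomial of the Fresnel surface (with `μ₁=μ₂=μ₃=ω=1`), i.e.
`p(η) = -(1 - q₀*(η) + q₁*(η))`, whose zero set is `{𝒩 = 0}`. -/
noncomputable def fresnelP (ε₁ ε₂ ε₃ : ℝ) (η : Fin 3 → ℝ) : ℝ :=
  -(1 - ((η 0) ^ 2 * (1 / ε₂ + 1 / ε₃) + (η 1) ^ 2 * (1 / ε₁ + 1 / ε₃)
      + (η 2) ^ 2 * (1 / ε₁ + 1 / ε₂))
    + (ε₁ * (η 0) ^ 2 + ε₂ * (η 1) ^ 2 + ε₃ * (η 2) ^ 2)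
      * ((η 0) ^ 2 + (η 1) ^ 2 + (η 2) ^ 2) / (ε₁ * ε₂ * ε₃))

/-- The entry `D i j` of the Hessian of the Fresnel polynomial. -/
noncomputable def fresnelHess (ε₁ ε₂ ε₃ : ℝ) (ζ : Fin 3 → ℝ) (i j : Fin 3) : ℝ :=
  fderiv ℝ (fun x => fderiv ℝ (fresnelP ε₁ ε₂ ε₃) x (Pi.single j 1)) ζ (Pi.single i 1)

section helpers

variable {E : Type*} [NormedAddCommGroup E] [NormedSpace ℝ E]

lemma FrAux.sq {f : E → ℝ} {f' : E →L[ℝ] ℝ} {x : E} (h : HasFDerivAt f f' x) :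
    HasFDerivAt (fun y => f y ^ 2) ((2 * f x) • f') x := by
  have h2 := h.mul h
  simp only [pow_two]
  rw [two_mul, add_smul]
  exact h2

lemma FrAux.divc {f : E → ℝ} {f' : E →L[ℝ] ℝ} {x : E} (h : HasFDerivAt f f' x) (c : ℝ) :
    HasFDerivAt (fun y => f y / c) (c⁻¹ • f') x := by
  simpa [div_eq_mul_inv] using h.mul_const c⁻¹

end helpers


lemma fderiv_fresnelP_apply (ε₁ ε₂ ε₃ : ℝ) (x v : Fin 3 → ℝ) :
    fderiv ℝ (fresnelP ε₁ ε₂ ε₃) x v =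
      2 * x 0 * ((1/ε₂+1/ε₃) - (ε₁*(x 0^2+x 1^2+x 2^2) + (ε₁*x 0^2+ε₂*x 1^2+ε₃*x 2^2))/(ε₁*ε₂*ε₃)) * v 0 + 2 * x 1 * ((1/ε₁+1/ε₃) - (ε₂*(x 0^2+x 1^2+x 2^2) + (ε₁*x 0^2+ε₂*x 1^2+ε₃*x 2^2))/(ε₁*ε₂*ε₃)) * v 1 + 2 * x 2 * ((1/ε₁+1/ε₂) - (ε₃*(x 0^2+x 1^2+x 2^2) + (ε₁*x 0^2+ε₂*x 1^2+ε₃*x 2^2))/(ε₁*ε₂*ε₃)) * v 2 := by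
  have h0 := hasFDerivAt_apply (𝕜 := ℝ) (0 : Fin 3) x
  have h1 := hasFDerivAt_apply (𝕜 := ℝ) (1 : Fin 3) x
  have h2 := hasFDerivAt_apply (𝕜 := ℝ) (2 : Fin 3) x
  have h0s := FrAux.sq h0
  have h1s := FrAux.sq h1
  have h2s := FrAux.sq h2
  have hA := ((h0s.mul_const (1/ε₂+1/ε₃)).add (h1s.mul_const (1/ε₁+1/ε₃))).add
    (h2s.mul_const (1/ε₁+1/ε₂))
  have hS := ((h0s.const_mul ε₁).add (h1s.const_mul ε₂)).add (h2s.const_mul ε₃)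
  have hR := (h0s.add h1s).add h2s
  have hB := FrAux.divc (hS.mul hR) (ε₁*ε₂*ε₃)
  have H := (((hasFDerivAt_const (1:ℝ) x).sub hA).add hB).neg
  have hF : HasFDerivAt (fresnelP ε₁ ε₂ ε₃) _ x := H
  rw [hF.fderiv]
  simp only [ContinuousLinearMap.neg_apply, ContinuousLinearMap.add_apply,
    ContinuousLinearMap.sub_apply, ContinuousLinearMap.smul_apply,
    ContinuousLinearMap.zero_apply, ContinuousLinearMap.proj_apply, smul_eq_mul, Pi.add_apply, Pi.mul_apply]
  ring


lemma fresnel_col0 (ε₁ ε₂ ε₃ : ℝ) :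
    (fun x : Fin 3 → ℝ => fderiv ℝ (fresnelP ε₁ ε₂ ε₃) x (Pi.single 0 1)) =
      (fun x : Fin 3 → ℝ => 2 * x 0 * ((1/ε₂+1/ε₃) - (ε₁*(x 0^2+x 1^2+x 2^2) + (ε₁*x 0^2+ε₂*x 1^2+ε₃*x 2^2))/(ε₁*ε₂*ε₃))) := by
  funext x
  rw [fderiv_fresnelP_apply]
  norm_num [Pi.single_apply, Fin.ext_iff]
  all_goals ring


lemma fresnel_col1 (ε₁ ε₂ ε₃ : ℝ) :
    (fun x : Fin 3 → ℝ => fderiv ℝ (fresnelP ε₁ ε₂ ε₃) x (Pi.single 1 1)) =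
      (fun x : Fin 3 → ℝ => 2 * x 1 * ((1/ε₁+1/ε₃) - (ε₂*(x 0^2+x 1^2+x 2^2) + (ε₁*x 0^2+ε₂*x 1^2+ε₃*x 2^2))/(ε₁*ε₂*ε₃))) := by
  funext x
  rw [fderiv_fresnelP_apply]
  norm_num [Pi.single_apply, Fin.ext_iff]
  all_goals ring


lemma fresnel_col2 (ε₁ ε₂ ε₃ : ℝ) :
    (fun x : Fin 3 → ℝ => fderiv ℝ (fresnelP ε₁ ε₂ ε₃) x (Pi.single 2 1)) =
      (fun x : Fin 3 → ℝ => 2 * x 2 * ((1/ε₁+1/ε₂) - (ε₃*(x 0^2+x 1^2+x 2^2) + (ε₁*x 0^2+ε₂*x 1^2+ε₃*x 2^2))/(ε₁*ε₂*ε₃))) := by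
  funext x
  rw [fderiv_fresnelP_apply]
  norm_num [Pi.single_apply, Fin.ext_iff]
  all_goals ring


lemma fderiv_g0_apply (ε₁ ε₂ ε₃ : ℝ) (x v : Fin 3 → ℝ) :
    fderiv ℝ (fun x : Fin 3 → ℝ => 2 * x 0 * ((1/ε₂+1/ε₃) - (ε₁*(x 0^2+x 1^2+x 2^2) + (ε₁*x 0^2+ε₂*x 1^2+ε₃*x 2^2))/(ε₁*ε₂*ε₃))) x v =
      (2*((1/ε₂+1/ε₃) - (ε₁*(x 0^2+x 1^2+x 2^2) + (ε₁*x 0^2+ε₂*x 1^2+ε₃*x 2^2))/(ε₁*ε₂*ε₃)) - 8*ε₁*x 0^2/(ε₁*ε₂*ε₃)) * v 0 + (-4*x 1*x 0*(ε₂+ε₁)/(ε₁*ε₂*ε₃)) * v 1 + (-4*x 2*x 0*(ε₃+ε₁)/(ε₁*ε₂*ε₃)) * v 2 := by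
  have h0 := hasFDerivAt_apply (𝕜 := ℝ) (0 : Fin 3) x
  have h1 := hasFDerivAt_apply (𝕜 := ℝ) (1 : Fin 3) x
  have h2 := hasFDerivAt_apply (𝕜 := ℝ) (2 : Fin 3) x
  have h0s := FrAux.sq h0
  have h1s := FrAux.sq h1
  have h2s := FrAux.sq h2
  have hS := ((h0s.const_mul ε₁).add (h1s.const_mul ε₂)).add (h2s.const_mul ε₃)
  have hR := (h0s.add h1s).add h2s
  have hin := (hasFDerivAt_const ((1:ℝ)/ε₂+1/ε₃) x).sub
    (FrAux.divc ((hR.const_mul ε₁).add hS) (ε₁*ε₂*ε₃))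
  have H := (h0.const_mul (2:ℝ)).mul hin
  have hF : HasFDerivAt (fun x : Fin 3 → ℝ => 2 * x 0 * ((1/ε₂+1/ε₃) - (ε₁*(x 0^2+x 1^2+x 2^2) + (ε₁*x 0^2+ε₂*x 1^2+ε₃*x 2^2))/(ε₁*ε₂*ε₃))) _ x := H
  rw [hF.fderiv]
  simp only [ContinuousLinearMap.neg_apply, ContinuousLinearMap.add_apply,
    ContinuousLinearMap.sub_apply, ContinuousLinearMap.smul_apply,
    ContinuousLinearMap.zero_apply, ContinuousLinearMap.proj_apply, smul_eq_mul, Pi.add_apply, Pi.mul_apply, Pi.sub_apply]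
  ring


lemma fderiv_g1_apply (ε₁ ε₂ ε₃ : ℝ) (x v : Fin 3 → ℝ) :
    fderiv ℝ (fun x : Fin 3 → ℝ => 2 * x 1 * ((1/ε₁+1/ε₃) - (ε₂*(x 0^2+x 1^2+x 2^2) + (ε₁*x 0^2+ε₂*x 1^2+ε₃*x 2^2))/(ε₁*ε₂*ε₃))) x v =
      (-4*x 0*x 1*(ε₁+ε₂)/(ε₁*ε₂*ε₃)) * v 0 + (2*((1/ε₁+1/ε₃) - (ε₂*(x 0^2+x 1^2+x 2^2) + (ε₁*x 0^2+ε₂*x 1^2+ε₃*x 2^2))/(ε₁*ε₂*ε₃)) - 8*ε₂*x 1^2/(ε₁*ε₂*ε₃)) * v 1 + (-4*x 2*x 1*(ε₃+ε₂)/(ε₁*ε₂*ε₃)) * v 2 := by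
  have h0 := hasFDerivAt_apply (𝕜 := ℝ) (0 : Fin 3) x
  have h1 := hasFDerivAt_apply (𝕜 := ℝ) (1 : Fin 3) x
  have h2 := hasFDerivAt_apply (𝕜 := ℝ) (2 : Fin 3) x
  have h0s := FrAux.sq h0
  have h1s := FrAux.sq h1
  have h2s := FrAux.sq h2
  have hS := ((h0s.const_mul ε₁).add (h1s.const_mul ε₂)).add (h2s.const_mul ε₃)
  have hR := (h0s.add h1s).add h2s
  have hin := (hasFDerivAt_const ((1:ℝ)/ε₁+1/ε₃) x).sub
    (FrAux.divc ((hR.const_mul ε₂).add hS) (ε₁*ε₂*ε₃))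
  have H := (h1.const_mul (2:ℝ)).mul hin
  have hF : HasFDerivAt (fun x : Fin 3 → ℝ => 2 * x 1 * ((1/ε₁+1/ε₃) - (ε₂*(x 0^2+x 1^2+x 2^2) + (ε₁*x 0^2+ε₂*x 1^2+ε₃*x 2^2))/(ε₁*ε₂*ε₃))) _ x := H
  rw [hF.fderiv]
  simp only [ContinuousLinearMap.neg_apply, ContinuousLinearMap.add_apply,
    ContinuousLinearMap.sub_apply, ContinuousLinearMap.smul_apply,
    ContinuousLinearMap.zero_apply, ContinuousLinearMap.proj_apply, smul_eq_mul, Pi.add_apply, Pi.mul_apply, Pi.sub_apply]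
  ring


lemma fderiv_g2_apply (ε₁ ε₂ ε₃ : ℝ) (x v : Fin 3 → ℝ) :
    fderiv ℝ (fun x : Fin 3 → ℝ => 2 * x 2 * ((1/ε₁+1/ε₂) - (ε₃*(x 0^2+x 1^2+x 2^2) + (ε₁*x 0^2+ε₂*x 1^2+ε₃*x 2^2))/(ε₁*ε₂*ε₃))) x v =
      (-4*x 0*x 2*(ε₁+ε₃)/(ε₁*ε₂*ε₃)) * v 0 + (-4*x 1*x 2*(ε₂+ε₃)/(ε₁*ε₂*ε₃)) * v 1 + (2*((1/ε₁+1/ε₂) - (ε₃*(x 0^2+x 1^2+x 2^2) + (ε₁*x 0^2+ε₂*x 1^2+ε₃*x 2^2))/(ε₁*ε₂*ε₃)) - 8*ε₃*x 2^2/(ε₁*ε₂*ε₃)) * v 2 := by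
  have h0 := hasFDerivAt_apply (𝕜 := ℝ) (0 : Fin 3) x
  have h1 := hasFDerivAt_apply (𝕜 := ℝ) (1 : Fin 3) x
  have h2 := hasFDerivAt_apply (𝕜 := ℝ) (2 : Fin 3) x
  have h0s := FrAux.sq h0
  have h1s := FrAux.sq h1
  have h2s := FrAux.sq h2
  have hS := ((h0s.const_mul ε₁).add (h1s.const_mul ε₂)).add (h2s.const_mul ε₃)
  have hR := (h0s.add h1s).add h2s
  have hin := (hasFDerivAt_const ((1:ℝ)/ε₁+1/ε₂) x).sub
    (FrAux.divc ((hR.const_mul ε₃).add hS) (ε₁*ε₂*ε₃))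
  have H := (h2.const_mul (2:ℝ)).mul hin
  have hF : HasFDerivAt (fun x : Fin 3 → ℝ => 2 * x 2 * ((1/ε₁+1/ε₂) - (ε₃*(x 0^2+x 1^2+x 2^2) + (ε₁*x 0^2+ε₂*x 1^2+ε₃*x 2^2))/(ε₁*ε₂*ε₃))) _ x := H
  rw [hF.fderiv]
  simp only [ContinuousLinearMap.neg_apply, ContinuousLinearMap.add_apply,
    ContinuousLinearMap.sub_apply, ContinuousLinearMap.smul_apply,
    ContinuousLinearMap.zero_apply, ContinuousLinearMap.proj_apply, smul_eq_mul, Pi.add_apply, Pi.mul_apply, Pi.sub_apply]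
  ring


lemma fresnel_hess00 (ε₁ ε₂ ε₃ : ℝ) (x : Fin 3 → ℝ) :
    fresnelHess ε₁ ε₂ ε₃ x 0 0 = (2*((1/ε₂+1/ε₃) - (ε₁*(x 0^2+x 1^2+x 2^2) + (ε₁*x 0^2+ε₂*x 1^2+ε₃*x 2^2))/(ε₁*ε₂*ε₃)) - 8*ε₁*x 0^2/(ε₁*ε₂*ε₃)) := by
  unfold fresnelHess
  rw [fresnel_col0, fderiv_g0_apply]
  norm_num [Pi.single_apply, Fin.ext_iff]
  all_goals ring


lemma fresnel_hess01 (ε₁ ε₂ ε₃ : ℝ) (x : Fin 3 → ℝ) :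
    fresnelHess ε₁ ε₂ ε₃ x 0 1 = (-4*x 0*x 1*(ε₁+ε₂)/(ε₁*ε₂*ε₃)) := by
  unfold fresnelHess
  rw [fresnel_col1, fderiv_g1_apply]
  norm_num [Pi.single_apply, Fin.ext_iff]
  all_goals ring


lemma fresnel_hess02 (ε₁ ε₂ ε₃ : ℝ) (x : Fin 3 → ℝ) :
    fresnelHess ε₁ ε₂ ε₃ x 0 2 = (-4*x 0*x 2*(ε₁+ε₃)/(ε₁*ε₂*ε₃)) := by
  unfold fresnelHess
  rw [fresnel_col2, fderiv_g2_apply]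
  norm_num [Pi.single_apply, Fin.ext_iff]
  all_goals ring


lemma fresnel_hess10 (ε₁ ε₂ ε₃ : ℝ) (x : Fin 3 → ℝ) :
    fresnelHess ε₁ ε₂ ε₃ x 1 0 = (-4*x 1*x 0*(ε₂+ε₁)/(ε₁*ε₂*ε₃)) := by
  unfold fresnelHess
  rw [fresnel_col0, fderiv_g0_apply]
  norm_num [Pi.single_apply, Fin.ext_iff]
  all_goals ring


lemma fresnel_hess11 (ε₁ ε₂ ε₃ : ℝ) (x : Fin 3 → ℝ) :
    fresnelHess ε₁ ε₂ ε₃ x 1 1 = (2*((1/ε₁+1/ε₃) - (ε₂*(x 0^2+x 1^2+x 2^2) + (ε₁*x 0^2+ε₂*x 1^2+ε₃*x 2^2))/(ε₁*ε₂*ε₃)) - 8*ε₂*x 1^2/(ε₁*ε₂*ε₃)) := by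
  unfold fresnelHess
  rw [fresnel_col1, fderiv_g1_apply]
  norm_num [Pi.single_apply, Fin.ext_iff]
  all_goals ring


lemma fresnel_hess12 (ε₁ ε₂ ε₃ : ℝ) (x : Fin 3 → ℝ) :
    fresnelHess ε₁ ε₂ ε₃ x 1 2 = (-4*x 1*x 2*(ε₂+ε₃)/(ε₁*ε₂*ε₃)) := by
  unfold fresnelHess
  rw [fresnel_col2, fderiv_g2_apply]
  norm_num [Pi.single_apply, Fin.ext_iff]
  all_goals ring


lemma fresnel_hess20 (ε₁ ε₂ ε₃ : ℝ) (x : Fin 3 → ℝ) :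
    fresnelHess ε₁ ε₂ ε₃ x 2 0 = (-4*x 2*x 0*(ε₃+ε₁)/(ε₁*ε₂*ε₃)) := by
  unfold fresnelHess
  rw [fresnel_col0, fderiv_g0_apply]
  norm_num [Pi.single_apply, Fin.ext_iff]
  all_goals ring


lemma fresnel_hess21 (ε₁ ε₂ ε₃ : ℝ) (x : Fin 3 → ℝ) :
    fresnelHess ε₁ ε₂ ε₃ x 2 1 = (-4*x 2*x 1*(ε₃+ε₂)/(ε₁*ε₂*ε₃)) := by
  unfold fresnelHess
  rw [fresnel_col1, fderiv_g1_apply]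
  norm_num [Pi.single_apply, Fin.ext_iff]
  all_goals ring


lemma fresnel_hess22 (ε₁ ε₂ ε₃ : ℝ) (x : Fin 3 → ℝ) :
    fresnelHess ε₁ ε₂ ε₃ x 2 2 = (2*((1/ε₁+1/ε₂) - (ε₃*(x 0^2+x 1^2+x 2^2) + (ε₁*x 0^2+ε₂*x 1^2+ε₃*x 2^2))/(ε₁*ε₂*ε₃)) - 8*ε₃*x 2^2/(ε₁*ε₂*ε₃)) := by
  unfold fresnelHess
  rw [fresnel_col2, fderiv_g2_apply]
  norm_num [Pi.single_apply, Fin.ext_iff]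
  all_goals ring
lemma FrAux.roots {T Δ s : ℝ} (hΔ : Δ < 0) (hs : s ^ 2 = T ^ 2 - 4 * Δ) (hsn : 0 ≤ s) :
    0 < (T + s) / 2 ∧ (T - s) / 2 < 0 := by
  constructor <;> nlinarith [hs, hsn, hΔ]

set_option maxHeartbeats 2000000 in
/-- At a singular point `ζ = (ζ₁,0,ζ₃)` of the Fresnel surface the Hessian has the stated
entries, `D₁₁D₃₃ - D₁₃² < 0`, and consequently two positive and one negative eigenvalue. -/
theorem stmt12 (ε₁ ε₂ ε₃ : ℝ) (h₀ : 0 < ε₁) (h₁₂ : ε₁ < ε₂) (h₂₃ : ε₂ < ε₃)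
    (ζ : Fin 3 → ℝ) (hζ₁pos : 0 < ζ 0) (hζ₃pos : 0 < ζ 2) (hζ₂ : ζ 1 = 0)
    (hζ₁ : (ζ 0) ^ 2 = ε₃ * (ε₁ - ε₂) / (ε₁ - ε₃))
    (hζ₃ : (ζ 2) ^ 2 = ε₁ * (ε₃ - ε₂) / (ε₃ - ε₁)) :
    let D := fresnelHess ε₁ ε₂ ε₃ ζ
    (D 1 1 = 2 * (ε₁ - ε₂) * (ε₂ - ε₃) / (ε₁ * ε₂ * ε₃) ∧ 0 < D 1 1) ∧
    (D 0 0 = -8 * (ε₂ - ε₁) / (ε₂ * (ε₃ - ε₁)) ∧ D 0 0 < 0) ∧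
    D 2 2 = -8 * (ε₂ - ε₃) / (ε₂ * (ε₁ - ε₃)) ∧
    D 0 2 = -4 * (ε₁ + ε₃) * Real.sqrt ((ε₂ - ε₁) * (ε₃ - ε₂))
      / (ε₂ * Real.sqrt (ε₁ * ε₃) * (ε₃ - ε₁)) ∧
    (D 0 1 = 0 ∧ D 1 2 = 0) ∧
    (D 0 0 * D 2 2 - (D 0 2) ^ 2 = -16 * (ε₂ - ε₁) * (ε₃ - ε₂) / (ε₁ * ε₂ ^ 2 * ε₃)
      ∧ D 0 0 * D 2 2 - (D 0 2) ^ 2 < 0) ∧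
    (∃ l₁ l₂ l₃ : ℝ, 0 < l₁ ∧ 0 < l₂ ∧ l₃ < 0 ∧
      (Matrix.of D).charpoly = (X - C l₁) * (X - C l₂) * (X - C l₃)) := by
  intro D
  have hD : ∀ i j, D i j = fresnelHess ε₁ ε₂ ε₃ ζ i j := fun _ _ => rfl
  clear_value D
  have he1 : ε₁ ≠ 0 := ne_of_gt h₀
  have h0₂ : 0 < ε₂ := lt_trans h₀ h₁₂
  have h0₃ : 0 < ε₃ := lt_trans h0₂ h₂₃
  have he2 : ε₂ ≠ 0 := ne_of_gt h0₂
  have he3 : ε₃ ≠ 0 := ne_of_gt h0₃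
  have h21 : 0 < ε₂ - ε₁ := by linarith
  have h32 : 0 < ε₃ - ε₂ := by linarith
  have h31 : 0 < ε₃ - ε₁ := by linarith
  have h31ne : ε₃ - ε₁ ≠ 0 := ne_of_gt h31
  have h13ne : ε₁ - ε₃ ≠ 0 := by intro h; apply h31ne; linarith
  have hz0 : ζ 0 ^ 2 = ε₃ * (ε₂ - ε₁) / (ε₃ - ε₁) := by
    rw [hζ₁, div_eq_div_iff h13ne h31ne]; ring
  have hRv : ζ 0 ^ 2 + ζ 1 ^ 2 + ζ 2 ^ 2 = ε₂ := by
    rw [hz0, hζ₂, hζ₃]; field_simp; ring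
  have hSv : ε₁ * ζ 0 ^ 2 + ε₂ * ζ 1 ^ 2 + ε₃ * ζ 2 ^ 2 = ε₁ * ε₃ := by
    rw [hz0, hζ₂, hζ₃]; field_simp; ring
  -- entry values
  have hv11 : D 1 1 = 2 * (ε₁ - ε₂) * (ε₂ - ε₃) / (ε₁ * ε₂ * ε₃) := by
    rw [hD 1 1, fresnel_hess11, hRv, hSv, hζ₂]
    field_simp; ring
  have hv00 : D 0 0 = -8 * (ε₂ - ε₁) / (ε₂ * (ε₃ - ε₁)) := by
    rw [hD 0 0, fresnel_hess00, hRv, hSv, hz0]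
    field_simp; ring
  have hv22 : D 2 2 = -8 * (ε₂ - ε₃) / (ε₂ * (ε₁ - ε₃)) := by
    rw [hD 2 2, fresnel_hess22, hRv, hSv, hζ₃]
    field_simp; ring
  have hv02' : D 0 2 = -4 * (ζ 0 * ζ 2) * (ε₁ + ε₃) / (ε₁ * ε₂ * ε₃) := by
    rw [hD 0 2, fresnel_hess02]; ring
  have hv20' : D 2 0 = -4 * (ζ 0 * ζ 2) * (ε₁ + ε₃) / (ε₁ * ε₂ * ε₃) := by
    rw [hD 2 0, fresnel_hess20]; ring
  have hv20 : D 2 0 = D 0 2 := by rw [hv20', hv02']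
  have hv01 : D 0 1 = 0 := by
    rw [hD 0 1, fresnel_hess01, hζ₂]; ring
  have hv10 : D 1 0 = 0 := by
    rw [hD 1 0, fresnel_hess10, hζ₂]; ring
  have hv12 : D 1 2 = 0 := by
    rw [hD 1 2, fresnel_hess12, hζ₂]; ring
  have hv21 : D 2 1 = 0 := by
    rw [hD 2 1, fresnel_hess21, hζ₂]; ring
  -- the sqrt form of D 0 2
  have hs2 : Real.sqrt (ε₁ * ε₃) ^ 2 = ε₁ * ε₃ := Real.sq_sqrt (by positivity)
  have hsne : Real.sqrt (ε₁ * ε₃) ≠ 0 := by positivity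
  have hw2 : Real.sqrt ((ε₂ - ε₁) * (ε₃ - ε₂)) ^ 2 = (ε₂ - ε₁) * (ε₃ - ε₂) :=
    Real.sq_sqrt (by positivity)
  have hprodz : ζ 0 * ζ 2
      = Real.sqrt (ε₁ * ε₃) * Real.sqrt ((ε₂ - ε₁) * (ε₃ - ε₂)) / (ε₃ - ε₁) := by
    have hsq : (ζ 0 * ζ 2) ^ 2
        = (Real.sqrt (ε₁ * ε₃) * Real.sqrt ((ε₂ - ε₁) * (ε₃ - ε₂)) / (ε₃ - ε₁)) ^ 2 := by
      rw [mul_pow, hz0, hζ₃, div_pow, mul_pow, hs2, hw2]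
      field_simp
    have hrnn : 0 ≤ Real.sqrt (ε₁ * ε₃) * Real.sqrt ((ε₂ - ε₁) * (ε₃ - ε₂)) / (ε₃ - ε₁) :=
      div_nonneg (by positivity) h31.le
    calc ζ 0 * ζ 2 = Real.sqrt ((ζ 0 * ζ 2) ^ 2) := (Real.sqrt_sq (by positivity)).symm
      _ = _ := by rw [hsq, Real.sqrt_sq hrnn]
  have hv02 : D 0 2 = -4 * (ε₁ + ε₃) * Real.sqrt ((ε₂ - ε₁) * (ε₃ - ε₂))
      / (ε₂ * Real.sqrt (ε₁ * ε₃) * (ε₃ - ε₁)) := by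
    rw [hv02', hprodz]
    set s := Real.sqrt (ε₁ * ε₃) with hsdef
    set w := Real.sqrt ((ε₂ - ε₁) * (ε₃ - ε₂)) with hwdef
    field_simp
    linear_combination (-w) * hs2
  -- determinant of the corner block
  have h02sq : (D 0 2) ^ 2 = 16 * (ζ 0 ^ 2) * (ζ 2 ^ 2) * (ε₁ + ε₃) ^ 2 / (ε₁ * ε₂ * ε₃) ^ 2 := by
    rw [hv02']; ring
  have hdetv : D 0 0 * D 2 2 - (D 0 2) ^ 2
      = -16 * (ε₂ - ε₁) * (ε₃ - ε₂) / (ε₁ * ε₂ ^ 2 * ε₃) := by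
    rw [hv00, hv22, h02sq, hz0, hζ₃]
    field_simp; ring
  -- signs
  have hp11 : 0 < D 1 1 := by
    have e : 2 * (ε₁ - ε₂) * (ε₂ - ε₃) / (ε₁ * ε₂ * ε₃)
        = 2 * ((ε₂ - ε₁) * (ε₃ - ε₂)) / (ε₁ * ε₂ * ε₃) := by ring
    rw [hv11, e]
    exact div_pos (by linarith [mul_pos h21 h32]) (by positivity)
  have hn00 : D 0 0 < 0 := by
    have e : -8 * (ε₂ - ε₁) / (ε₂ * (ε₃ - ε₁)) = -(8 * (ε₂ - ε₁) / (ε₂ * (ε₃ - ε₁))) := by ring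
    rw [hv00, e]
    exact neg_lt_zero.mpr (div_pos (by linarith) (mul_pos h0₂ h31))
  have hdetneg : D 0 0 * D 2 2 - (D 0 2) ^ 2 < 0 := by
    have e : -16 * (ε₂ - ε₁) * (ε₃ - ε₂) / (ε₁ * ε₂ ^ 2 * ε₃)
        = -(16 * ((ε₂ - ε₁) * (ε₃ - ε₂)) / (ε₁ * ε₂ ^ 2 * ε₃)) := by ring
    rw [hdetv, e]
    refine neg_lt_zero.mpr (div_pos ?_ (by positivity))
    have := mul_pos h21 h32
    linarith
  refine ⟨⟨hv11, hp11⟩, ⟨hv00, hn00⟩, hv22, hv02, ⟨hv01, hv12⟩, ⟨hdetv, hdetneg⟩, ?_⟩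
  -- eigenvalues
  set T := D 0 0 + D 2 2 with hT
  set Δ := D 0 0 * D 2 2 - (D 0 2) ^ 2 with hΔ
  have hΔneg : Δ < 0 := hdetneg
  have hdisc : 0 ≤ T ^ 2 - 4 * Δ := by
    have := sq_nonneg T
    linarith
  set s := Real.sqrt (T ^ 2 - 4 * Δ) with hs
  have hss : s ^ 2 = T ^ 2 - 4 * Δ := Real.sq_sqrt hdisc
  have hsnn : 0 ≤ s := Real.sqrt_nonneg _
  obtain ⟨hl2, hl3⟩ := FrAux.roots hΔneg hss hsnn
  refine ⟨D 1 1, (T + s) / 2, (T - s) / 2, hp11, hl2, hl3, ?_⟩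
  have hsum : ((T + s) / 2) + ((T - s) / 2) = D 0 0 + D 2 2 := by rw [hT]; ring
  have hprod : ((T + s) / 2) * ((T - s) / 2) = D 0 0 * D 2 2 - D 0 2 * D 0 2 := by
    have e : D 0 0 * D 2 2 - D 0 2 * D 0 2 = Δ := by rw [hΔ]; ring
    rw [e]; linear_combination (-(1:ℝ)/4) * hss
  have h1 : (C ((T + s) / 2) + C ((T - s) / 2) : ℝ[X]) = C (D 0 0) + C (D 2 2) := by
    rw [← C_add, ← C_add, hsum]
  have h2 : (C ((T + s) / 2) * C ((T - s) / 2) : ℝ[X])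
      = C (D 0 0) * C (D 2 2) - C (D 0 2) * C (D 0 2) := by
    rw [← C_mul, ← C_mul, ← C_mul, ← C_sub, hprod]
  rw [show (Matrix.of D).charpoly = ((Matrix.of D).charmatrix).det from rfl, Matrix.det_fin_three]
  simp only [Matrix.charmatrix_apply_eq, Matrix.of_apply,
    Matrix.charmatrix_apply_ne _ _ _ (by decide : (0:Fin 3) ≠ 1),
    Matrix.charmatrix_apply_ne _ _ _ (by decide : (0:Fin 3) ≠ 2),
    Matrix.charmatrix_apply_ne _ _ _ (by decide : (1:Fin 3) ≠ 0),
    Matrix.charmatrix_apply_ne _ _ _ (by decide : (1:Fin 3) ≠ 2),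
    Matrix.charmatrix_apply_ne _ _ _ (by decide : (2:Fin 3) ≠ 0),
    Matrix.charmatrix_apply_ne _ _ _ (by decide : (2:Fin 3) ≠ 1)]
  rw [hv01, hv10, hv12, hv21, hv20]
  simp only [map_zero, neg_zero]
  linear_combination (X - C (D 1 1)) * X * h1 - (X - C (D 1 1)) * h2
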